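/- arXiv:1109.1169 — 2 statements merged into one kernel-verified Lean document; each statement's English description precedes it below -/
import Mathlib

section
/- For 0 ≤ i ≤ n, the dual Bernstein polynomial admits the short expansion D^n_i(x; α, β) = [(-1)^{n-i} (σ+1)_n / (B(α+1,β+1) (α+1)_{n-i} (β+1)_i)] · Σ_{j=0}^{i} ((-i)_j / (-n)_j) · R_{n-j}^{(α, β+j+1)}(x), where σ = α+β+1. -/
open Finset

/-- Pochhammer symbol `(c)_k = c (c+1) ⋯ (c+k-1)`. -/
noncomputable def poch (c : ℝ) (k : ℕ) : ℝ := ∏ j ∈ Finset.range k, (c + j)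

/-- Bernstein polynomial `B^n_i(x)`. -/
noncomputable def bern (n i : ℕ) (x : ℝ) : ℝ := (n.choose i : ℝ) * x ^ i * (1 - x) ^ (n - i)

/-- Jacobi inner product on [0,1]. -/
noncomputable def jip (α β : ℝ) (f g : ℝ → ℝ) : ℝ :=
  ∫ x in (0:ℝ)..1, (1 - x) ^ α * x ^ β * f x * g x

/-- Beta function `B(a,b) = Γ(a)Γ(b)/Γ(a+b)`. -/
noncomputable def betaF (a b : ℝ) : ℝ := Real.Gamma a * Real.Gamma b / Real.Gamma (a + b)

/-- Hahn polynomial `Q_m(x; α, β, N)` as a terminating ₃F₂ sum. -/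
noncomputable def hahn (m : ℕ) (x : ℝ) (α β : ℝ) (N : ℕ) : ℝ :=
  ∑ k ∈ Finset.range (m + 1),
    poch (-(m : ℝ)) k * poch ((m : ℝ) + α + β + 1) k * poch (-x) k /
      ((k.factorial : ℝ) * poch (α + 1) k * poch (-(N : ℝ)) k)

/-- Shifted Jacobi polynomial `R_m^{(α,β)}(x)`. -/
noncomputable def sjac (m : ℕ) (α β : ℝ) (x : ℝ) : ℝ :=
  (poch (α + 1) m / (m.factorial : ℝ)) *
    ∑ k ∈ Finset.range (m + 1),
      poch (-(m : ℝ)) k * poch ((m : ℝ) + α + β + 1) k /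
        ((k.factorial : ℝ) * poch (α + 1) k) * (1 - x) ^ k


set_option maxHeartbeats 2000000

noncomputable def sjacP (m : ℕ) (a b : ℝ) : Polynomial ℝ :=
  Polynomial.C (poch (a + 1) m / (m.factorial : ℝ)) *
    ∑ k ∈ Finset.range (m + 1),
      Polynomial.C (poch (-(m : ℝ)) k * poch ((m : ℝ) + a + b + 1) k /
        ((k.factorial : ℝ) * poch (a + 1) k)) * (1 - Polynomial.X)^k

noncomputable def Epoly (α β : ℝ) (n i : ℕ) : Polynomial ℝ :=
  Polynomial.C ((-1:ℝ)^(n-i) * poch (α+β+2) n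
      / (betaF (α+1) (β+1) * poch (α+1) (n-i) * poch (β+1) i)) *
    ∑ j ∈ Finset.range (i+1),
      Polynomial.C (poch (-(i:ℝ)) j / poch (-(n:ℝ)) j) * sjacP (n-j) α (β+(j:ℝ)+1)

lemma poch_zero (c : ℝ) : poch c 0 = 1 := by simp [poch]

lemma poch_succ (c : ℝ) (k : ℕ) : poch c (k+1) = poch c k * (c + k) := by
  simp [poch, Finset.prod_range_succ]

lemma poch_add (c : ℝ) (k l : ℕ) : poch c (k + l) = poch c k * poch (c + k) l := by
  simp only [poch, Finset.prod_range_add]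
  congr 1
  refine Finset.prod_congr rfl fun j _ => by push_cast; ring

lemma poch_split (c : ℝ) {l m : ℕ} (h : l ≤ m) : poch c m = poch c l * poch (c + l) (m - l) := by
  rw [← poch_add]
  congr 1
  omega

lemma poch_pos {c : ℝ} (hc : 0 < c) (k : ℕ) : 0 < poch c k :=
  Finset.prod_pos fun j _ => by positivity

lemma poch_ne_zero {c : ℝ} (hc : 0 < c) (k : ℕ) : poch c k ≠ 0 := (poch_pos hc k).ne'

lemma poch_neg_nat (m l : ℕ) (h : l ≤ m) :
    poch (-(m : ℝ)) l = (-1 : ℝ)^l * (m.descFactorial l : ℝ) := by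
  rw [Nat.descFactorial_eq_prod_range, poch]
  push_cast
  calc ∏ j ∈ Finset.range l, (-(m:ℝ) + j)
      = ∏ j ∈ Finset.range l, (-1 : ℝ) * ((m : ℝ) - j) :=
        Finset.prod_congr rfl fun j hj => by ring
    _ = (∏ _j ∈ Finset.range l, (-1 : ℝ)) * ∏ j ∈ Finset.range l, ((m : ℝ) - j) := by
        rw [← Finset.prod_mul_distrib]
    _ = (-1 : ℝ)^l * ∏ j ∈ Finset.range l, ((m : ℝ) - j) := by
        rw [Finset.prod_const, Finset.card_range]
    _ = (-1 : ℝ)^l * ∏ j ∈ Finset.range l, ((m - j : ℕ) : ℝ) := by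
        congr 1
        refine Finset.prod_congr rfl fun j hj => ?_
        have hj' : j ≤ m := le_trans (le_of_lt (Finset.mem_range.1 hj)) h
        rw [Nat.cast_sub hj']

lemma poch_neg_nat' (m l : ℕ) (h : l ≤ m) :
    poch (-(m : ℝ)) l = (-1 : ℝ)^l * (l.factorial : ℝ) * (m.choose l : ℝ) := by
  rw [poch_neg_nat m l h, Nat.descFactorial_eq_factorial_mul_choose]
  push_cast
  ring

lemma poch_eq_zero_of (r k : ℕ) (h : r < k) : poch (-(r : ℝ)) k = 0 := by
  apply Finset.prod_eq_zero (Finset.mem_range.2 h)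
  simp

lemma gamma_poch (c : ℝ) (hc : 0 < c) (k : ℕ) :
    Real.Gamma (c + k) = Real.Gamma c * poch c k := by
  induction k with
  | zero => simp [poch_zero]
  | succ k ih =>
    have h1 : c + (k+1 : ℕ) = (c + k) + 1 := by push_cast; ring
    rw [h1, Real.Gamma_add_one (by positivity), ih, poch_succ]
    ring

lemma poch_head (c : ℝ) (k : ℕ) : poch c (k+1) = c * poch (c+1) k := by
  induction k with
  | zero => simp [poch_zero, poch_succ]
  | succ k ih =>
    rw [poch_succ, ih, poch_succ]
    push_cast; ring

lemma vander (m : ℕ) (b : ℝ) : ∀ c : ℝ,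
    ∑ s ∈ Finset.range (m+1), (-1:ℝ)^s * (m.choose s : ℝ) * poch b s * poch (c + s) (m - s)
      = poch (c - b) m := by
  induction m with
  | zero => intro c; simp [poch_zero]
  | succ m ih =>
    intro c
    set T : ℕ → ℝ := fun s => poch b s * poch (c + s) (m + 1 - s) with hT
    have step1 : ∑ s ∈ Finset.range (m+2), (-1:ℝ)^s * ((m+1).choose s : ℝ) * poch b s * poch (c + s) (m + 1 - s)
        = ∑ s ∈ Finset.range (m+2), (-1:ℝ)^s * ((m+1).choose s : ℝ) * T s := by
      refine Finset.sum_congr rfl fun s _ => by rw [hT]; ring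
    rw [step1, Finset.sum_range_succ' _ (m+1)]
    have pascal : ∀ s : ℕ, (((m+1).choose (s+1) : ℕ) : ℝ) = (m.choose s : ℝ) + (m.choose (s+1) : ℝ) := by
      intro s; rw [Nat.choose_succ_succ]; push_cast; ring
    have split : ∑ s ∈ Finset.range (m+1), (-1:ℝ)^(s+1) * (((m+1).choose (s+1) : ℕ) : ℝ) * T (s+1)
        = (∑ s ∈ Finset.range (m+1), (-1:ℝ)^(s+1) * (m.choose s : ℝ) * T (s+1))
          + ∑ s ∈ Finset.range (m+1), (-1:ℝ)^(s+1) * (m.choose (s+1) : ℝ) * T (s+1) := by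
      rw [← Finset.sum_add_distrib]
      refine Finset.sum_congr rfl fun s _ => by rw [pascal]; ring
    rw [split]
    have third : ∑ s ∈ Finset.range (m+1), (-1:ℝ)^(s+1) * (m.choose (s+1) : ℝ) * T (s+1)
        = (∑ s ∈ Finset.range (m+1), (-1:ℝ)^s * (m.choose s : ℝ) * T s) - T 0 := by
      have h1 : ∑ s ∈ Finset.range (m+2), (-1:ℝ)^s * (m.choose s : ℝ) * T s
          = (∑ s ∈ Finset.range (m+1), (-1:ℝ)^(s+1) * (m.choose (s+1) : ℝ) * T (s+1)) + (-1:ℝ)^0 * (m.choose 0 : ℝ) * T 0 :=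
        Finset.sum_range_succ' _ (m+1)
      have h2 : ∑ s ∈ Finset.range (m+2), (-1:ℝ)^s * (m.choose s : ℝ) * T s
          = ∑ s ∈ Finset.range (m+1), (-1:ℝ)^s * (m.choose s : ℝ) * T s := by
        rw [Finset.sum_range_succ]
        simp [Nat.choose_succ_self]
      rw [h2] at h1
      simp only [pow_zero, Nat.choose_zero_right, Nat.cast_one, one_mul] at h1
      linarith
    rw [third]
    have hBA : (∑ s ∈ Finset.range (m+1), (-1:ℝ)^(s+1) * (m.choose s : ℝ) * T (s+1))
          + ∑ s ∈ Finset.range (m+1), (-1:ℝ)^s * (m.choose s : ℝ) * T s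
        = (c - b) * poch ((c+1) - b) m := by
      rw [← Finset.sum_add_distrib, ← ih (c+1), Finset.mul_sum]
      refine Finset.sum_congr rfl fun s hs => ?_
      have hsm : s ≤ m := Nat.lt_succ_iff.1 (Finset.mem_range.1 hs)
      have e1 : T s = poch b s * ((c + s) * poch ((c+1) + s) (m - s)) := by
        simp only [hT]
        have : m + 1 - s = (m - s) + 1 := by omega
        rw [this, poch_head]
        ring_nf
      have e2 : T (s+1) = (poch b s * (b + s)) * poch ((c+1) + s) (m - s) := by
        simp only [hT]
        have h3 : m + 1 - (s+1) = m - s := by omega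
        rw [h3, poch_succ]
        have : c + ((s:ℕ)+1 : ℕ) = (c+1) + s := by push_cast; ring
        rw [this]
      rw [e1, e2]
      ring
    have goal_eq : poch (c - b) (m+1) = (c - b) * poch ((c+1) - b) m := by
      rw [poch_head]
      ring_nf
    rw [goal_eq]
    simp only [pow_zero, Nat.choose_zero_right, Nat.cast_one, one_mul]
    linarith

lemma chu (m : ℕ) (b c : ℝ) (hc : 0 < c) :
    ∑ l ∈ Finset.range (m+1), poch (-(m:ℝ)) l * poch b l / ((l.factorial : ℝ) * poch c l)
      = poch (c - b) m / poch c m := by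
  rw [← vander m b c, Finset.sum_div]
  refine Finset.sum_congr rfl fun l hl => ?_
  have hlm : l ≤ m := Nat.lt_succ_iff.1 (Finset.mem_range.1 hl)
  rw [poch_neg_nat' m l hlm, poch_split c hlm]
  have h1 : poch c l ≠ 0 := poch_ne_zero hc l
  have h2 : poch (c + l) (m - l) ≠ 0 := poch_ne_zero (by positivity) _
  have h3 : (l.factorial : ℝ) ≠ 0 := by positivity
  field_simp

lemma poch_congr {a a' : ℝ} (k : ℕ) (h : a = a') : poch a k = poch a' k := by rw [h]

lemma descF_cast (a k : ℕ) (h : k ≤ a) :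
    (a.descFactorial k : ℝ) = (a.factorial : ℝ) / ((a-k).factorial : ℝ) := by
  rw [Nat.descFactorial_eq_factorial_mul_choose, Nat.cast_mul, Nat.cast_choose ℝ h]
  have h1 : ((k.factorial : ℕ) : ℝ) ≠ 0 := by positivity
  have h2 : (((a-k).factorial : ℕ) : ℝ) ≠ 0 := by positivity
  field_simp

lemma intW {a b : ℝ} (ha : -1 < a) (hb : -1 < b) :
    IntervalIntegrable (fun x : ℝ => (1-x)^a * x^b) MeasureTheory.volume 0 1 := by
  have half1 : IntervalIntegrable (fun x : ℝ => (1-x)^a * x^b) MeasureTheory.volume 0 (1/2) := by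
    have hx : IntervalIntegrable (fun x : ℝ => x^b) MeasureTheory.volume 0 (1/2) :=
      intervalIntegral.intervalIntegrable_rpow' hb
    refine hx.continuousOn_mul ?_
    refine ContinuousOn.rpow_const (continuousOn_const.sub continuousOn_id) ?_
    intro x hx
    rw [Set.uIcc_of_le (by norm_num : (0:ℝ) ≤ 1/2)] at hx
    left
    have := hx.2
    intro h
    simp only [sub_eq_zero] at h
    linarith
  have half2 : IntervalIntegrable (fun x : ℝ => (1-x)^a * x^b) MeasureTheory.volume (1/2) 1 := by
    have hx : IntervalIntegrable (fun x : ℝ => x^a) MeasureTheory.volume 0 (1/2) :=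
      intervalIntegral.intervalIntegrable_rpow' ha
    have h2 := hx.comp_sub_left 1
    norm_num at h2
    have h3 : IntervalIntegrable (fun x : ℝ => (1-x)^a) MeasureTheory.volume (1/2) 1 := h2.symm
    refine h3.mul_continuousOn ?_
    refine ContinuousOn.rpow_const continuousOn_id ?_
    intro x hx
    rw [Set.uIcc_of_le (by norm_num : (1:ℝ)/2 ≤ 1)] at hx
    left
    have := hx.1
    intro h
    have : x = 0 := h
    linarith
  exact half1.trans half2

lemma betaI {a b : ℝ} (ha : -1 < a) (hb : -1 < b) :
    ∫ x in (0:ℝ)..1, (1-x)^a * x^b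
      = Real.Gamma (a+1) * Real.Gamma (b+1) / Real.Gamma (a+b+2) := by
  have hu : (0:ℝ) < b + 1 := by linarith
  have hv : (0:ℝ) < a + 1 := by linarith
  set u : ℂ := ((b+1 : ℝ) : ℂ)
  set v : ℂ := ((a+1 : ℝ) : ℂ)
  have hu' : 0 < u.re := by simp [u, hu]
  have hv' : 0 < v.re := by simp [v, hv]
  have key := Complex.Gamma_mul_Gamma_eq_betaIntegral hu' hv'
  have hbeta : Complex.betaIntegral u v = ((∫ x in (0:ℝ)..1, (1-x)^a * x^b : ℝ) : ℂ) := by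
    rw [Complex.betaIntegral]
    rw [← intervalIntegral.integral_ofReal]
    refine intervalIntegral.integral_congr ?_
    intro x hx
    rw [Set.uIcc_of_le (by norm_num : (0:ℝ) ≤ 1)] at hx
    have h0x : 0 ≤ x := hx.1
    have hx1 : 0 ≤ 1 - x := by linarith [hx.2]
    have e1 : u - 1 = ((b : ℝ) : ℂ) := by simp [u]
    have e2 : v - 1 = ((a : ℝ) : ℂ) := by simp [v]
    beta_reduce
    rw [e1, e2]
    rw [← Complex.ofReal_cpow h0x b]
    have : (1 : ℂ) - (x : ℂ) = (((1 - x : ℝ)) : ℂ) := by push_cast; ring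
    rw [this, ← Complex.ofReal_cpow hx1 a]
    push_cast
    ring
  rw [hbeta] at key
  have huv : u + v = ((a+b+2 : ℝ) : ℂ) := by simp [u, v]; ring
  rw [huv] at key
  rw [Complex.Gamma_ofReal, Complex.Gamma_ofReal, Complex.Gamma_ofReal] at key
  have key2 : Real.Gamma (b+1) * Real.Gamma (a+1)
      = Real.Gamma (a+b+2) * ∫ x in (0:ℝ)..1, (1-x)^a * x^b := by
    exact_mod_cast key
  have hG : Real.Gamma (a+b+2) ≠ 0 := (Real.Gamma_pos_of_pos (by linarith)).ne'
  field_simp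
  linarith [key2]

lemma rpow_mul_pow {y : ℝ} (hy : 0 ≤ y) {a : ℝ} (ha : -1 < a) (l : ℕ) :
    y ^ a * y ^ l = y ^ (a + l) := by
  rcases eq_or_lt_of_le hy with h0 | h0
  · rcases Nat.eq_zero_or_pos l with hl | hl
    · subst hl; simp
    · rw [← h0]
      have hal : (0:ℝ) < a + l := by
        have : (1:ℝ) ≤ (l:ℝ) := by exact_mod_cast hl
        linarith
      rw [Real.zero_rpow hal.ne', zero_pow (by omega : l ≠ 0), mul_zero]
  · rw [← Real.rpow_natCast y l, ← Real.rpow_add h0]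

section main
variable {α β : ℝ}

lemma jip_integrable2 (hα : -1 < α) (hβ : -1 < β) {f g : ℝ → ℝ} (hf : Continuous f)
    (hg : Continuous g) :
    IntervalIntegrable (fun x : ℝ => (1-x)^α * x^β * f x * g x) MeasureTheory.volume 0 1 := by
  have h := (intW hα hβ).mul_continuousOn (hf.mul hg).continuousOn
  have e : (fun x : ℝ => ((1-x)^α * x^β) * (f x * g x)) = fun x : ℝ => (1-x)^α * x^β * f x * g x :=
    funext fun x => by ring
  rw [← e]; exact h

lemma bern_continuous (n k : ℕ) : Continuous (bern n k) := by
  unfold bern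
  continuity

lemma bernstein_pow (n t : ℕ) (ht : t ≤ n) (x : ℝ) :
    (n.choose t : ℝ) * x^t = ∑ k ∈ Finset.range (n+1), (k.choose t : ℝ) * bern n k x := by
  unfold bern
  have h1 : ∑ k ∈ Finset.range (n+1), (k.choose t : ℝ) * ((n.choose k : ℝ) * x ^ k * (1-x)^(n-k))
      = ∑ k ∈ Finset.Ico t (n+1), (k.choose t : ℝ) * ((n.choose k : ℝ) * x ^ k * (1-x)^(n-k)) := by
    symm
    apply Finset.sum_subset
    · intro k hk
      simp only [Finset.mem_Ico, Finset.mem_range] at *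
      omega
    · intro k hk hk2
      simp only [Finset.mem_Ico, Finset.mem_range] at *
      have : k < t := by omega
      rw [Nat.choose_eq_zero_of_lt this]
      simp
  rw [h1, Finset.sum_Ico_eq_sum_range]
  have h2 : n + 1 - t = (n - t) + 1 := by omega
  rw [h2]
  have h3 : ∀ u ∈ Finset.range ((n-t)+1),
      ((t+u).choose t : ℝ) * ((n.choose (t+u) : ℝ) * x ^ (t+u) * (1-x)^(n-(t+u)))
      = (n.choose t : ℝ) * x^t * (((n-t).choose u : ℝ) * x^u * (1-x)^((n-t)-u)) := by
    intro u hu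
    have hu' : u ≤ n - t := by
      have := Finset.mem_range.1 hu; omega
    have hkn : t + u ≤ n := by omega
    have hid : (n.choose (t+u)) * ((t+u).choose t) = n.choose t * (n-t).choose u := by
      have := Nat.choose_mul (n := n) (k := t+u) (s := t) (Nat.le_add_right t u)
      simpa [Nat.add_sub_cancel_left] using this
    have hco : ((t+u).choose t : ℝ) * (n.choose (t+u) : ℝ) = (n.choose t : ℝ) * ((n-t).choose u : ℝ) := by
      exact_mod_cast by rw [mul_comm]; exact_mod_cast congrArg (fun z : ℕ => (z : ℝ)) hid
    have hnn : n - (t+u) = (n-t) - u := by omega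
    rw [pow_add, hnn]
    calc ((t+u).choose t : ℝ) * ((n.choose (t+u) : ℝ) * (x ^ t * x ^ u) * (1-x)^((n-t)-u))
        = (((t+u).choose t : ℝ) * (n.choose (t+u) : ℝ)) * (x ^ t * x ^ u) * (1-x)^((n-t)-u) := by ring
      _ = ((n.choose t : ℝ) * ((n-t).choose u : ℝ)) * (x ^ t * x ^ u) * (1-x)^((n-t)-u) := by rw [hco]
      _ = (n.choose t : ℝ) * x^t * (((n-t).choose u : ℝ) * x^u * (1-x)^((n-t)-u)) := by ring
  rw [Finset.sum_congr rfl h3, ← Finset.mul_sum]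
  have h4 : ∑ u ∈ Finset.range ((n-t)+1), ((n-t).choose u : ℝ) * x^u * (1-x)^((n-t)-u) = 1 := by
    calc ∑ u ∈ Finset.range ((n-t)+1), ((n-t).choose u : ℝ) * x^u * (1-x)^((n-t)-u)
        = ∑ u ∈ Finset.range ((n-t)+1), x^u * (1-x)^((n-t)-u) * ((n-t).choose u : ℝ) :=
          Finset.sum_congr rfl fun u _ => by ring
      _ = (x + (1-x))^(n-t) := (add_pow x (1-x) (n-t)).symm
      _ = 1 := by norm_num
  rw [h4, mul_one]

lemma mom_D (hα : -1 < α) (hβ : -1 < β) (n i : ℕ) (hi : i ≤ n) (D : Polynomial ℝ)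
    (hdual : ∀ j ≤ n, jip α β (fun x => D.eval x) (bern n j) = if i = j then 1 else 0)
    (t : ℕ) (ht : t ≤ n) :
    jip α β (fun x => D.eval x) (fun x => x^t) = (i.choose t : ℝ) / (n.choose t : ℝ) := by
  have hD : Continuous fun x : ℝ => D.eval x := D.continuous
  have key : (n.choose t : ℝ) * jip α β (fun x => D.eval x) (fun x => x^t)
      = ∑ k ∈ Finset.range (n+1), (k.choose t : ℝ) * jip α β (fun x => D.eval x) (bern n k) := by
    unfold jip
    rw [← intervalIntegral.integral_const_mul]
    have hfun : (fun x : ℝ => (n.choose t:ℝ) * ((1-x)^α * x^β * D.eval x * x^t))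
        = fun x : ℝ => ∑ k ∈ Finset.range (n+1),
            (k.choose t : ℝ) * ((1-x)^α * x^β * D.eval x * bern n k x) := by
      funext x
      rw [show (n.choose t:ℝ) * ((1-x)^α * x^β * D.eval x * x^t)
          = (1-x)^α * x^β * D.eval x * ((n.choose t:ℝ) * x^t) from by ring,
        bernstein_pow n t ht x, Finset.mul_sum]
      exact Finset.sum_congr rfl fun k _ => by ring
    rw [hfun, intervalIntegral.integral_finset_sum
      (fun k _ => (jip_integrable2 hα hβ hD (bern_continuous n k)).const_mul _)]
    exact Finset.sum_congr rfl fun k _ => intervalIntegral.integral_const_mul _ _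
  have key2 : ∑ k ∈ Finset.range (n+1), (k.choose t : ℝ) * jip α β (fun x => D.eval x) (bern n k)
      = (i.choose t : ℝ) := by
    rw [Finset.sum_congr rfl (fun k hk => by
      rw [hdual k (by have := Finset.mem_range.1 hk; omega)])]
    rw [Finset.sum_congr rfl (fun k _ =>
      show (k.choose t : ℝ) * (if i = k then (1:ℝ) else 0) = if i = k then (k.choose t : ℝ) else 0
      from by split <;> simp)]
    rw [Finset.sum_ite_eq]
    simp [Finset.mem_range, Nat.lt_succ_of_le hi]
  have hnt : (n.choose t : ℝ) ≠ 0 := by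
    have := Nat.choose_pos ht
    positivity
  rw [key2] at key
  rw [← key]
  field_simp

lemma mom_sjac (hα : -1 < α) (hβ : -1 < β) (m j t : ℕ) :
    jip α β (fun x => sjac m α (β + (j:ℝ) + 1) x) (fun x => x^t)
      = (poch (α+1) m / (m.factorial : ℝ))
        * (Real.Gamma (α+1) * Real.Gamma (β+(t:ℝ)+1) / Real.Gamma (α+β+(t:ℝ)+2))
        * (poch ((t:ℝ) - m - j) m / poch (α+β+(t:ℝ)+2) m) := by
  have hc0 : (0:ℝ) < α+β+(t:ℝ)+2 := by
    have : (0:ℝ) ≤ (t:ℝ) := Nat.cast_nonneg t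
    linarith
  have hA1 : (0:ℝ) < α + 1 := by linarith
  set b : ℝ := (m:ℝ) + α + (β + (j:ℝ) + 1) + 1 with hb
  set c : ℝ := α+β+(t:ℝ)+2 with hc
  set A : ℝ := poch (α+1) m / (m.factorial : ℝ) with hA
  set d : ℕ → ℝ := fun k => poch (-(m:ℝ)) k * poch b k / ((k.factorial : ℝ) * poch (α+1) k)
    with hd
  have step1 : jip α β (fun x => sjac m α (β + (j:ℝ) + 1) x) (fun x => x^t)
      = ∑ k ∈ Finset.range (m+1), (A * d k)
          * ∫ x in (0:ℝ)..1, (1-x)^α * x^β * ((1-x)^k * x^t) := by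
    unfold jip sjac
    have hfun : (fun x : ℝ => (1-x)^α * x^β
          * ((poch (α + 1) m / (m.factorial : ℝ)) * ∑ k ∈ Finset.range (m + 1),
            poch (-(m : ℝ)) k * poch ((m : ℝ) + α + (β + (j:ℝ) + 1) + 1) k /
              ((k.factorial : ℝ) * poch (α + 1) k) * (1 - x) ^ k) * x^t)
        = fun x : ℝ => ∑ k ∈ Finset.range (m+1),
            (A * d k) * ((1-x)^α * x^β * ((1-x)^k * x^t)) := by
      funext x
      rw [Finset.mul_sum, Finset.mul_sum, Finset.sum_mul]
      refine Finset.sum_congr rfl fun k _ => ?_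
      simp only [hd, hA, hb]
      ring
    rw [hfun, intervalIntegral.integral_finset_sum]
    · exact Finset.sum_congr rfl fun k _ => intervalIntegral.integral_const_mul _ _
    · intro k _
      refine IntervalIntegrable.const_mul ?_ _
      exact (intW hα hβ).mul_continuousOn (by continuity : Continuous fun x : ℝ => (1-x)^k * x^t).continuousOn
  have step2 : ∀ k : ℕ, (∫ x in (0:ℝ)..1, (1-x)^α * x^β * ((1-x)^k * x^t))
      = Real.Gamma (α+1) * poch (α+1) k * Real.Gamma (β+(t:ℝ)+1) / (Real.Gamma c * poch c k) := by
    intro k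
    have e1 : (∫ x in (0:ℝ)..1, (1-x)^α * x^β * ((1-x)^k * x^t))
        = ∫ x in (0:ℝ)..1, (1-x)^(α+(k:ℝ)) * x^(β+(t:ℝ)) := by
      refine intervalIntegral.integral_congr ?_
      intro x hx
      rw [Set.uIcc_of_le (by norm_num : (0:ℝ) ≤ 1)] at hx
      have h1 : (0:ℝ) ≤ 1 - x := by linarith [hx.2]
      have h2 : (0:ℝ) ≤ x := hx.1
      beta_reduce
      rw [← rpow_mul_pow h1 hα k, ← rpow_mul_pow h2 hβ t]
      ring
    rw [e1, betaI (by linarith [Nat.cast_nonneg (α := ℝ) k] : (-1:ℝ) < α+(k:ℝ))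
      (by linarith [Nat.cast_nonneg (α := ℝ) t] : (-1:ℝ) < β+(t:ℝ))]
    have e2 : α+(k:ℝ)+1 = (α+1)+(k:ℝ) := by ring
    have e3 : α+(k:ℝ)+(β+(t:ℝ))+2 = c+(k:ℝ) := by rw [hc]; ring
    rw [e2, e3, gamma_poch (α+1) hA1 k, gamma_poch c hc0 k]
  have step3 : ∑ k ∈ Finset.range (m+1), (A * d k)
        * (Real.Gamma (α+1) * poch (α+1) k * Real.Gamma (β+(t:ℝ)+1) / (Real.Gamma c * poch c k))
      = A * (Real.Gamma (α+1) * Real.Gamma (β+(t:ℝ)+1) / Real.Gamma c)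
        * ∑ k ∈ Finset.range (m+1), poch (-(m:ℝ)) k * poch b k / ((k.factorial : ℝ) * poch c k) := by
    rw [Finset.mul_sum]
    refine Finset.sum_congr rfl fun k _ => ?_
    simp only [hd]
    have h1 : poch (α+1) k ≠ 0 := poch_ne_zero hA1 k
    have h2 : poch c k ≠ 0 := poch_ne_zero hc0 k
    have h3 : (k.factorial : ℝ) ≠ 0 := by positivity
    have h4 : Real.Gamma c ≠ 0 := (Real.Gamma_pos_of_pos hc0).ne'
    field_simp
  rw [step1]
  rw [Finset.sum_congr rfl fun k _ => by rw [step2 k]]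
  rw [step3, chu m b c hc0]
  have e4 : c - b = (t:ℝ) - m - j := by rw [hc, hb]; ring
  rw [e4]

lemma scalar_sum (hα : -1 < α) (hβ : -1 < β) (n i t : ℕ) (hi : i ≤ n) (ht : t ≤ n) :
    ((-1:ℝ)^(n-i) * poch (α+β+2) n / (betaF (α+1) (β+1) * poch (α+1) (n-i) * poch (β+1) i))
      * ∑ j ∈ Finset.range (i+1), (poch (-(i:ℝ)) j / poch (-(n:ℝ)) j)
        * ((poch (α+1) (n-j) / ((n-j).factorial : ℝ))
          * (Real.Gamma (α+1) * Real.Gamma (β+(t:ℝ)+1) / Real.Gamma (α+β+(t:ℝ)+2))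
          * (poch ((t:ℝ) - ((n-j:ℕ)) - j) (n-j) / poch (α+β+(t:ℝ)+2) (n-j)))
    = (i.choose t : ℝ) / (n.choose t : ℝ) := by
  have ht0 : (0:ℝ) ≤ (t:ℝ) := Nat.cast_nonneg t
  have hc0 : (0:ℝ) < α+β+(t:ℝ)+2 := by linarith
  have hcast : ∀ j ∈ Finset.range (i+1), ((t:ℝ) - ((n-j:ℕ)) - j) = -(((n-t:ℕ)) : ℝ) := by
    intro j hj
    have hj' : j ≤ n := le_trans (Nat.lt_succ_iff.1 (Finset.mem_range.1 hj)) hi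
    push_cast [Nat.cast_sub hj', Nat.cast_sub ht]
    ring
  rw [Finset.sum_congr rfl fun j hj => by rw [hcast j hj]]
  by_cases hti : t ≤ i
  case neg =>
    have hit : i < t := by omega
    rw [Finset.sum_eq_zero, mul_zero, Nat.choose_eq_zero_of_lt hit]
    · simp
    · intro j hj
      have hj' : j ≤ i := Nat.lt_succ_iff.1 (Finset.mem_range.1 hj)
      rw [poch_eq_zero_of (n-t) (n-j) (by omega)]
      simp
  case pos =>
  set K : ℝ := Real.Gamma (α+1) * Real.Gamma (β+(t:ℝ)+1) / Real.Gamma (α+β+(t:ℝ)+2) with hK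
  set c : ℝ := α+β+(t:ℝ)+2 with hc
  set g : ℕ → ℝ := fun j => (poch (-(i:ℝ)) j / poch (-(n:ℝ)) j)
        * ((poch (α+1) (n-j) / ((n-j).factorial : ℝ)) * K
          * (poch (-(((n-t:ℕ)) : ℝ)) (n-j) / poch c (n-j))) with hg
  have h1 : ∑ j ∈ Finset.range (i+1), g j = ∑ s ∈ Finset.range (i+1), g (i-s) := by
    rw [← Finset.sum_range_reflect g (i+1)]
    exact Finset.sum_congr rfl fun s _ => by simp [Nat.add_sub_cancel]
  have h2 : ∑ s ∈ Finset.range (i+1), g (i-s) = ∑ s ∈ Finset.range ((i-t)+1), g (i-s) := by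
    symm
    apply Finset.sum_subset
    · exact Finset.range_subset_range.2 (by omega)
    · intro s hs hns
      have hs1 : s ≤ i := Nat.lt_succ_iff.1 (Finset.mem_range.1 hs)
      have hs2 : i - t < s := by
        by_contra hcon
        exact hns (Finset.mem_range.2 (by omega))
      have hz : poch (-(((n-t:ℕ)) : ℝ)) (n-(i-s)) = 0 :=
        poch_eq_zero_of (n-t) (n-(i-s)) (by omega)
      simp only [hg, hz]
      simp
  set R : ℝ := K * (-1:ℝ)^(n-i) * (i.factorial : ℝ) * ((n-t).factorial : ℝ) * poch (α+1) (n-i)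
      / ((n.factorial : ℝ) * ((i-t).factorial : ℝ) * poch c (n-i)) with hR
  have h3 : ∀ s ∈ Finset.range ((i-t)+1), g (i-s)
      = R * (poch (-(((i-t:ℕ)) : ℝ)) s * poch (α+((n-i:ℕ):ℝ)+1) s
          / ((s.factorial : ℝ) * poch (c+((n-i:ℕ):ℝ)) s)) := by
    intro s hs
    have hs1 : s ≤ i - t := Nat.lt_succ_iff.1 (Finset.mem_range.1 hs)
    have e1 : n - (i - s) = (n-i) + s := by omega
    simp only [hg]
    rw [e1]
    rw [poch_neg_nat i (i-s) (by omega), poch_neg_nat n (i-s) (by omega),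
      poch_neg_nat (n-t) ((n-i)+s) (by omega), poch_neg_nat (i-t) s (by omega)]
    rw [poch_add (α+1) (n-i) s, poch_add c (n-i) s]
    rw [descF_cast i (i-s) (by omega), descF_cast n (i-s) (by omega),
      descF_cast (n-t) ((n-i)+s) (by omega), descF_cast (i-t) s (by omega)]
    rw [show i - (i-s) = s from by omega, show n - (i-s) = (n-i)+s from by omega,
      show (n-t) - ((n-i)+s) = (i-t)-s from by omega]
    rw [pow_add]
    rw [poch_congr s (show (α+1)+((n-i:ℕ):ℝ) = α+((n-i:ℕ):ℝ)+1 from by ring)]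
    have nz1 : ((-1:ℝ))^(i-s) ≠ 0 := by
      apply pow_ne_zero; norm_num
    rw [mul_div_mul_left _ _ nz1]
    have nz2 : ((i.factorial : ℕ) : ℝ) ≠ 0 := by positivity
    have nz3 : ((n.factorial : ℕ) : ℝ) ≠ 0 := by positivity
    have nz4 : ((s.factorial : ℕ) : ℝ) ≠ 0 := by positivity
    have nz5 : ((((n-i)+s).factorial : ℕ) : ℝ) ≠ 0 := by positivity
    have nz6 : ((((i-t)-s).factorial : ℕ) : ℝ) ≠ 0 := by positivity
    have nz7 : ((((n-t)).factorial : ℕ) : ℝ) ≠ 0 := by positivity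
    have nz8 : ((((i-t)).factorial : ℕ) : ℝ) ≠ 0 := by positivity
    have nz9 : poch c (n-i) ≠ 0 := poch_ne_zero hc0 _
    have nz10 : poch (c+((n-i:ℕ):ℝ)) s ≠ 0 :=
      poch_ne_zero (by have := Nat.cast_nonneg (α := ℝ) (n-i); linarith) _
    have nz11 : poch (α+1) (n-i) ≠ 0 := poch_ne_zero (by linarith) _
    have nz12 : poch (α+((n-i:ℕ):ℝ)+1) s ≠ 0 :=
      poch_ne_zero (by have := Nat.cast_nonneg (α := ℝ) (n-i); linarith) _
    rw [hR]
    set S : ℝ := (-1:ℝ)^(n-i) with hS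
    set T : ℝ := (-1:ℝ)^s with hTT
    set q1 : ℝ := poch (α+1) (n-i) with hq1
    set q2 : ℝ := poch (α+((n-i:ℕ):ℝ)+1) s with hq2
    set q3 : ℝ := poch c (n-i) with hq3
    set q4 : ℝ := poch (c+((n-i:ℕ):ℝ)) s with hq4
    set F1 : ℝ := ((i.factorial : ℕ) : ℝ) with hF1
    set F2 : ℝ := ((n.factorial : ℕ) : ℝ) with hF2
    set F3 : ℝ := ((s.factorial : ℕ) : ℝ) with hF3
    set F4 : ℝ := ((((n-i)+s).factorial : ℕ) : ℝ) with hF4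
    set F5 : ℝ := ((((i-t)-s).factorial : ℕ) : ℝ) with hF5
    set F6 : ℝ := (((n-t).factorial : ℕ) : ℝ) with hF6
    set F7 : ℝ := (((i-t).factorial : ℕ) : ℝ) with hF7
    field_simp
  rw [h1, h2, Finset.sum_congr rfl h3, ← Finset.mul_sum,
    chu (i-t) (α+((n-i:ℕ):ℝ)+1) (c+((n-i:ℕ):ℝ))
      (by have := Nat.cast_nonneg (α := ℝ) (n-i); linarith)]
  rw [poch_congr (i-t) (show c+((n-i:ℕ):ℝ) - (α+((n-i:ℕ):ℝ)+1) = β+(t:ℝ)+1 from by rw [hc]; ring)]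
  -- final scalar identity
  have hGb : Real.Gamma (β+(t:ℝ)+1) = Real.Gamma (β+1) * poch (β+1) t := by
    rw [show β+(t:ℝ)+1 = (β+1)+(t:ℝ) from by ring, gamma_poch (β+1) (by linarith) t]
  have hGc : Real.Gamma c = Real.Gamma (α+β+2) * poch (α+β+2) t := by
    rw [show c = (α+β+2)+(t:ℝ) from by rw [hc]; ring, gamma_poch (α+β+2) (by linarith) t]
  have hpb : poch (β+1) i = poch (β+1) t * poch (β+(t:ℝ)+1) (i-t) := by
    rw [poch_split (β+1) hti, poch_congr (i-t) (show (β+1)+(t:ℕ) = β+(t:ℝ)+1 from by push_cast; ring)]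
  have hps : poch (α+β+2) n = poch (α+β+2) t * (poch c (n-i) * poch (c+((n-i:ℕ):ℝ)) (i-t)) := by
    rw [poch_split (α+β+2) ht, poch_congr (n-t) (show (α+β+2)+(t:ℕ) = c from by rw [hc]; push_cast; ring),
      poch_split c (show n-i ≤ n-t from by omega), show (n-t)-(n-i) = i-t from by omega]
  rw [hR, hK]
  simp only [betaF]
  rw [show α+1+(β+1) = α+β+2 from by ring]
  rw [hGb, hGc, hpb, hps, Nat.cast_choose ℝ hti, Nat.cast_choose ℝ ht]
  have nzGa : Real.Gamma (α+1) ≠ 0 := (Real.Gamma_pos_of_pos (by linarith)).ne'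
  have nzGb : Real.Gamma (β+1) ≠ 0 := (Real.Gamma_pos_of_pos (by linarith)).ne'
  have nzGc : Real.Gamma (α+β+2) ≠ 0 := (Real.Gamma_pos_of_pos (by linarith)).ne'
  have nzp1 : poch (β+1) t ≠ 0 := poch_ne_zero (by linarith) _
  have nzp2 : poch (α+β+2) t ≠ 0 := poch_ne_zero (by linarith) _
  have nzp3 : poch c (n-i) ≠ 0 := poch_ne_zero hc0 _
  have nzp4 : poch (c+((n-i:ℕ):ℝ)) (i-t) ≠ 0 :=
    poch_ne_zero (by have := Nat.cast_nonneg (α := ℝ) (n-i); linarith) _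
  have nzp5 : poch (β+(t:ℝ)+1) (i-t) ≠ 0 := poch_ne_zero (by linarith) _
  have nzp6 : poch (α+1) (n-i) ≠ 0 := poch_ne_zero (by linarith) _
  have nzf : ∀ m : ℕ, ((m.factorial : ℕ) : ℝ) ≠ 0 := fun m => by positivity
  rcases Nat.even_or_odd (n-i) with he | he <;>
  · first
      | rw [Even.neg_one_pow he] | rw [Odd.neg_one_pow he]
    set G1 : ℝ := Real.Gamma (α+1) with hG1
    set G2 : ℝ := Real.Gamma (β+1) with hG2
    set G3 : ℝ := Real.Gamma (α+β+2) with hG3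
    set p1 : ℝ := poch (β+1) t with hp1
    set p2 : ℝ := poch (α+β+2) t with hp2
    set p3 : ℝ := poch c (n-i) with hp3
    set p4 : ℝ := poch (c+((n-i:ℕ):ℝ)) (i-t) with hp4
    set p5 : ℝ := poch (β+(t:ℝ)+1) (i-t) with hp5
    set p6 : ℝ := poch (α+1) (n-i) with hp6
    set F1 : ℝ := ((i.factorial : ℕ) : ℝ) with hF1
    set F2 : ℝ := ((n.factorial : ℕ) : ℝ) with hF2
    set F3 : ℝ := ((t.factorial : ℕ) : ℝ) with hF3
    set F4 : ℝ := (((i-t).factorial : ℕ) : ℝ) with hF4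
    set F5 : ℝ := (((n-t).factorial : ℕ) : ℝ) with hF5
    have hF1n : F1 ≠ 0 := nzf i
    have hF2n : F2 ≠ 0 := nzf n
    have hF3n : F3 ≠ 0 := nzf t
    have hF4n : F4 ≠ 0 := nzf (i-t)
    have hF5n : F5 ≠ 0 := nzf (n-t)
    field_simp

lemma sjac_cont (m : ℕ) (a b : ℝ) : Continuous (fun x => sjac m a b x) := by
  unfold sjac
  exact continuous_const.mul (continuous_finset_sum _ fun k _ =>
    continuous_const.mul ((continuous_const.sub continuous_id).pow k))

lemma mom_E (hα : -1 < α) (hβ : -1 < β) (n i : ℕ) (hi : i ≤ n) (t : ℕ) (ht : t ≤ n) :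
    jip α β (fun x => ((-1:ℝ)^(n-i) * poch (α+β+2) n
        / (betaF (α+1) (β+1) * poch (α+1) (n-i) * poch (β+1) i))
      * ∑ j ∈ Finset.range (i+1), poch (-(i:ℝ)) j / poch (-(n:ℝ)) j
          * sjac (n-j) α (β+(j:ℝ)+1) x) (fun x => x^t)
    = (i.choose t : ℝ) / (n.choose t : ℝ) := by
  set Cst : ℝ := (-1:ℝ)^(n-i) * poch (α+β+2) n
      / (betaF (α+1) (β+1) * poch (α+1) (n-i) * poch (β+1) i) with hCst
  have lin : jip α β (fun x => Cst * ∑ j ∈ Finset.range (i+1),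
        poch (-(i:ℝ)) j / poch (-(n:ℝ)) j * sjac (n-j) α (β+(j:ℝ)+1) x) (fun x => x^t)
      = Cst * ∑ j ∈ Finset.range (i+1), (poch (-(i:ℝ)) j / poch (-(n:ℝ)) j)
          * jip α β (fun x => sjac (n-j) α (β+(j:ℝ)+1) x) (fun x => x^t) := by
    unfold jip
    have hfun : (fun x : ℝ => (1-x)^α * x^β * (Cst * ∑ j ∈ Finset.range (i+1),
          poch (-(i:ℝ)) j / poch (-(n:ℝ)) j * sjac (n-j) α (β+(j:ℝ)+1) x) * x^t)
        = fun x : ℝ => ∑ j ∈ Finset.range (i+1),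
            (Cst * (poch (-(i:ℝ)) j / poch (-(n:ℝ)) j))
              * ((1-x)^α * x^β * sjac (n-j) α (β+(j:ℝ)+1) x * x^t) := by
      funext x
      rw [Finset.mul_sum, Finset.mul_sum, Finset.sum_mul]
      exact Finset.sum_congr rfl fun j _ => by ring
    rw [hfun, intervalIntegral.integral_finset_sum
      (fun j _ => (jip_integrable2 hα hβ (sjac_cont (n-j) α (β+(j:ℝ)+1)) (continuous_pow t)).const_mul _)]
    rw [Finset.mul_sum]
    exact Finset.sum_congr rfl fun j _ => by
      rw [intervalIntegral.integral_const_mul]; ring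
  rw [lin, Finset.sum_congr rfl fun j _ => by rw [mom_sjac hα hβ (n-j) j t]]
  exact scalar_sum hα hβ n i t hi ht

lemma sjacP_eval (m : ℕ) (a b x : ℝ) : (sjacP m a b).eval x = sjac m a b x := by
  simp [sjacP, sjac, Polynomial.eval_finset_sum]

lemma sjacP_deg (m : ℕ) (a b : ℝ) : (sjacP m a b).natDegree ≤ m := by
  refine (Polynomial.natDegree_C_mul_le _ _).trans
    (Polynomial.natDegree_sum_le_of_forall_le _ _ fun k hk => ?_)
  refine (Polynomial.natDegree_C_mul_le _ _).trans ?_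
  have h1 : (1 - Polynomial.X : Polynomial ℝ).natDegree ≤ 1 :=
    (Polynomial.natDegree_sub_le _ _).trans (by simp)
  have := Polynomial.natDegree_pow_le_of_le k h1
  have hk' : k ≤ m := Nat.lt_succ_iff.1 (Finset.mem_range.1 hk)
  omega

lemma Epoly_eval (n i : ℕ) (x : ℝ) : (Epoly α β n i).eval x
    = ((-1:ℝ)^(n-i) * poch (α+β+2) n
        / (betaF (α+1) (β+1) * poch (α+1) (n-i) * poch (β+1) i))
      * ∑ j ∈ Finset.range (i+1), poch (-(i:ℝ)) j / poch (-(n:ℝ)) j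
          * sjac (n-j) α (β+(j:ℝ)+1) x := by
  simp [Epoly, Polynomial.eval_finset_sum, sjacP_eval]

lemma Epoly_deg (n i : ℕ) (hi : i ≤ n) : (Epoly α β n i).natDegree ≤ n := by
  refine (Polynomial.natDegree_C_mul_le _ _).trans
    (Polynomial.natDegree_sum_le_of_forall_le _ _ fun j hj => ?_)
  exact (Polynomial.natDegree_C_mul_le _ _).trans ((sjacP_deg (n-j) _ _).trans (by omega))

lemma zero_of_moments (hα : -1 < α) (hβ : -1 < β) (n : ℕ) (P : Polynomial ℝ)
    (hdeg : P.natDegree ≤ n)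
    (hmom : ∀ t ≤ n, jip α β (fun x => P.eval x) (fun x => x^t) = 0) : P = 0 := by
  by_contra hP
  have hPc : Continuous fun x : ℝ => P.eval x := P.continuous
  have hPP : jip α β (fun x => P.eval x) (fun x => P.eval x) = 0 := by
    unfold jip
    have hfun : (fun x : ℝ => (1-x)^α * x^β * P.eval x * P.eval x)
        = fun x : ℝ => ∑ t ∈ Finset.range (n+1),
            P.coeff t * ((1-x)^α * x^β * P.eval x * x^t) := by
      funext x
      nth_rewrite 2 [Polynomial.eval_eq_sum_range' (Nat.lt_succ_of_le hdeg) x]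
      rw [Finset.mul_sum]
      exact Finset.sum_congr rfl fun t _ => by ring
    rw [hfun, intervalIntegral.integral_finset_sum
      (fun t _ => (jip_integrable2 hα hβ hPc (continuous_pow t)).const_mul _)]
    have : ∀ t ∈ Finset.range (n+1),
        (∫ x in (0:ℝ)..1, P.coeff t * ((1-x)^α * x^β * P.eval x * x^t)) = 0 := by
      intro t ht
      rw [intervalIntegral.integral_const_mul]
      have := hmom t (Nat.lt_succ_iff.1 (Finset.mem_range.1 ht))
      unfold jip at this
      rw [this, mul_zero]
    rw [Finset.sum_congr rfl this, Finset.sum_const_zero]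
  set F : ℝ → ℝ := fun x => (1-x)^α * x^β * P.eval x * P.eval x with hF
  have hint : IntervalIntegrable F MeasureTheory.volume 0 1 :=
    jip_integrable2 hα hβ hPc hPc
  have hIoc : MeasureTheory.IntegrableOn F (Set.Ioc 0 1) MeasureTheory.volume :=
    (intervalIntegrable_iff_integrableOn_Ioc_of_le (by norm_num)).1 hint
  have h0 : ∫ x in Set.Ioc (0:ℝ) 1, F x = 0 := by
    have := hPP
    unfold jip at this
    rwa [intervalIntegral.integral_of_le (by norm_num : (0:ℝ) ≤ 1)] at this
  have hnn : 0 ≤ᵐ[MeasureTheory.volume.restrict (Set.Ioc (0:ℝ) 1)] F := by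
    rw [Filter.EventuallyLE, MeasureTheory.ae_restrict_iff' measurableSet_Ioc]
    filter_upwards with x
    intro hx
    simp only [Pi.zero_apply]
    have h1 : (0:ℝ) ≤ 1 - x := by linarith [hx.2]
    have h2 : (0:ℝ) ≤ x := le_of_lt hx.1
    have h3 := mul_nonneg (mul_nonneg (Real.rpow_nonneg h1 α) (Real.rpow_nonneg h2 β))
      (mul_self_nonneg (P.eval x))
    rw [hF]
    calc (0:ℝ) ≤ ((1-x)^α * x^β) * (P.eval x * P.eval x) := h3
      _ = (1-x)^α * x^β * P.eval x * P.eval x := by ring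
  have hzero : F =ᵐ[MeasureTheory.volume.restrict (Set.Ioc (0:ℝ) 1)] 0 :=
    (MeasureTheory.integral_eq_zero_iff_of_nonneg_ae hnn hIoc).1 h0
  rw [Filter.EventuallyEq, MeasureTheory.ae_restrict_iff' measurableSet_Ioc] at hzero
  rw [MeasureTheory.ae_iff] at hzero
  have hroots : MeasureTheory.volume {x : ℝ | P.IsRoot x} = 0 :=
    (Polynomial.finite_setOf_isRoot hP).measure_zero _
  have hsub : Set.Ioo (0:ℝ) 1 ⊆ {x : ℝ | P.IsRoot x}
      ∪ {x : ℝ | ¬ (x ∈ Set.Ioc (0:ℝ) 1 → F x = (0 : ℝ → ℝ) x)} := by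
    intro x hx
    by_cases hFx : F x = 0
    · left
      have hw : (0:ℝ) < (1-x)^α * x^β :=
        mul_pos (Real.rpow_pos_of_pos (by linarith [hx.2]) α)
          (Real.rpow_pos_of_pos hx.1 β)
      have hFx' : ((1-x)^α * x^β) * (P.eval x * P.eval x) = 0 := by
        rw [← hFx, hF]; ring
      rcases mul_eq_zero.1 hFx' with h | h
      · exact absurd h hw.ne'
      · exact mul_self_eq_zero.1 h
    · right
      intro hcon
      exact hFx (hcon ⟨hx.1, le_of_lt hx.2⟩)
  have hle := MeasureTheory.measure_mono (μ := MeasureTheory.volume) hsub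
  have hun := MeasureTheory.measure_union_le (μ := MeasureTheory.volume)
    {x : ℝ | P.IsRoot x} {x : ℝ | ¬ (x ∈ Set.Ioc (0:ℝ) 1 → F x = (0 : ℝ → ℝ) x)}
  rw [hroots, hzero] at hun
  simp only [zero_add, nonpos_iff_eq_zero] at hun
  have : MeasureTheory.volume (Set.Ioo (0:ℝ) 1) = 0 := le_antisymm (le_trans hle (le_of_eq hun)) (zero_le)
  rw [Real.volume_Ioo] at this
  norm_num at this

end main

theorem dual_bernstein_short_expansion (α β : ℝ) (hα : α > -1) (hβ : β > -1)
    (n i : ℕ) (hi : i ≤ n) (D : Polynomial ℝ) (hdeg : D.natDegree ≤ n)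
    (hdual : ∀ j ≤ n, jip α β (fun x => D.eval x) (bern n j) = if i = j then 1 else 0)
    (x : ℝ) :
    D.eval x =
      ((-1 : ℝ) ^ (n - i) * poch (α + β + 2) n /
          (betaF (α + 1) (β + 1) * poch (α + 1) (n - i) * poch (β + 1) i)) *
        ∑ j ∈ Finset.range (i + 1),
          poch (-(i : ℝ)) j / poch (-(n : ℝ)) j * sjac (n - j) α (β + (j : ℝ) + 1) x := by

  have hDE : D - Epoly α β n i = 0 := by
    apply zero_of_moments hα hβ n
    · exact (Polynomial.natDegree_sub_le _ _).trans (max_le hdeg (Epoly_deg n i hi))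
    · intro t ht
      have hEc : Continuous fun y : ℝ => (Epoly α β n i).eval y := (Epoly α β n i).continuous
      have hDc : Continuous fun y : ℝ => D.eval y := D.continuous
      have hsplit : jip α β (fun y => (D - Epoly α β n i).eval y) (fun y => y^t)
          = jip α β (fun y => D.eval y) (fun y => y^t)
            - jip α β (fun y => (Epoly α β n i).eval y) (fun y => y^t) := by
        unfold jip
        rw [← intervalIntegral.integral_sub (jip_integrable2 hα hβ hDc (continuous_pow t))
          (jip_integrable2 hα hβ hEc (continuous_pow t))]
        refine intervalIntegral.integral_congr fun y _ => ?_
        simp only [Polynomial.eval_sub]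
        ring
      have hE2 : jip α β (fun y => (Epoly α β n i).eval y) (fun y => y^t)
          = (i.choose t : ℝ) / (n.choose t : ℝ) := by
        have hfeq : (fun y : ℝ => (Epoly α β n i).eval y)
            = fun y : ℝ => ((-1:ℝ)^(n-i) * poch (α+β+2) n
                / (betaF (α+1) (β+1) * poch (α+1) (n-i) * poch (β+1) i))
              * ∑ j ∈ Finset.range (i+1), poch (-(i:ℝ)) j / poch (-(n:ℝ)) j
                  * sjac (n-j) α (β+(j:ℝ)+1) y := funext fun y => Epoly_eval n i y
        rw [hfeq]
        exact mom_E hα hβ n i hi t ht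
      rw [hsplit, hE2, mom_D hα hβ n i hi D hdual t ht, sub_self]
  have hD : D = Epoly α β n i := by
    have := sub_eq_zero.1 hDE
    exact this
  rw [hD, Epoly_eval n i x]
end

section
/- For k ≤ i ≤ n-l, the constrained dual Bernstein polynomial has the Bézier representation D^{(n,k,l)}_i(x; α, β) = Σ_{j=k}^{n-l} C_{ij} B^n_j(x), where C_{ij} = U_i U_j c_{i-k, j-k}(n-k-l, α+2l, β+2k) and U_r = C(n-k-l, r-k)/C(n, r). -/
open Finset

section Aux

open MeasureTheory intervalIntegral Polynomial

lemma bern_cont (n i : ℕ) : Continuous (bern n i) := by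
  unfold bern; fun_prop

lemma integ_aux {a b : ℝ} (ha : -1 < a) (hb : -1 < b) {f g : ℝ → ℝ}
    (hf : Continuous f) (hg : Continuous g) :
    IntervalIntegrable (fun x => (1 - x) ^ a * x ^ b * f x * g x) volume 0 1 := by
  have key : ∀ (G : ℝ → ℝ), Continuous G →
      IntervalIntegrable (fun x => (1 - x) ^ a * x ^ b * G x) volume 0 1 := by
    intro G hG
    have h1 : IntervalIntegrable (fun x => (1 - x) ^ a * x ^ b * G x) volume 0 (1/2) := by
      have hx : IntervalIntegrable (fun x : ℝ => x ^ b) volume 0 (1/2) :=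
        intervalIntegrable_rpow' hb
      have hcont : ContinuousOn (fun x : ℝ => (1 - x) ^ a * G x) (Set.uIcc 0 (1/2)) := by
        apply ContinuousOn.mul _ hG.continuousOn
        apply ContinuousOn.rpow_const (by fun_prop)
        intro x hx
        rw [Set.uIcc_of_le (by norm_num)] at hx
        left
        have := hx.2
        norm_num at this ⊢
        linarith
      have := hx.mul_continuousOn hcont
      have heq : (fun x : ℝ => x ^ b * ((1 - x) ^ a * G x))
          = fun x => (1 - x) ^ a * x ^ b * G x := by funext x; ring
      rwa [heq] at this
    have h2 : IntervalIntegrable (fun x => (1 - x) ^ a * x ^ b * G x) volume (1/2) 1 := by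
      have hx : IntervalIntegrable (fun x : ℝ => x ^ a) volume 0 (1/2) :=
        intervalIntegrable_rpow' ha
      have hx' := hx.comp_sub_left 1
      norm_num at hx'
      have hcont : ContinuousOn (fun x : ℝ => x ^ b * G x) (Set.uIcc (1/2) 1) := by
        apply ContinuousOn.mul _ hG.continuousOn
        apply ContinuousOn.rpow_const continuousOn_id
        intro x hx
        rw [Set.uIcc_of_le (by norm_num)] at hx
        left
        have := hx.1
        intro h; simp only [id_eq] at h; rw [h] at this; norm_num at this
      have := hx'.symm.mul_continuousOn hcont
      have heq : (fun x : ℝ => (1 - x) ^ a * (x ^ b * G x))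
          = fun x => (1 - x) ^ a * x ^ b * G x := by funext x; ring
      rwa [heq] at this
    exact h1.trans h2
  have := key (fun x => f x * g x) (hf.mul hg)
  have heq : (fun x : ℝ => (1 - x) ^ a * x ^ b * (f x * g x))
      = fun x => (1 - x) ^ a * x ^ b * f x * g x := by funext x; ring
  rwa [heq] at this

lemma pow_shift (α β : ℝ) (hα : -1 < α) (hβ : -1 < β) (k l : ℕ) (u : ℝ) {x : ℝ}
    (hx0 : 0 ≤ x) (hx1 : x ≤ 1) :
    (1 - x) ^ (α + 2 * (l:ℝ)) * x ^ (β + 2 * (k:ℝ)) * u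
      = (1 - x) ^ α * x ^ β * (x ^ (2 * k) * ((1 - x) ^ (2 * l) * u)) := by
  rcases eq_or_lt_of_le hx0 with h0 | h0
  · rcases Nat.eq_zero_or_pos k with hk | hk
    · subst hk
      rcases Nat.eq_zero_or_pos l with hl | hl
      · subst hl; simp [← h0]
      · simp only [← h0, Nat.cast_zero, mul_zero, add_zero, sub_zero, Real.one_rpow, one_pow,
          pow_zero]
        ring
    · rw [← h0]
      have hk' : (1:ℝ) ≤ (k:ℝ) := by exact_mod_cast hk
      rw [Real.zero_rpow (by intro h; nlinarith : β + 2 * (k:ℝ) ≠ 0),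
        zero_pow (by omega : 2 * k ≠ 0)]
      ring
  · rcases eq_or_lt_of_le hx1 with h1 | h1
    · subst h1
      rcases Nat.eq_zero_or_pos l with hl | hl
      · subst hl; simp
      · have hl' : (1:ℝ) ≤ (l:ℝ) := by exact_mod_cast hl
        rw [sub_self, Real.zero_rpow (by intro h; nlinarith : α + 2 * (l:ℝ) ≠ 0),
          zero_pow (by omega : 2 * l ≠ 0)]
        ring
    · have hx1' : (0:ℝ) < 1 - x := by linarith
      rw [show α + 2 * (l:ℝ) = α + ((2*l : ℕ) : ℝ) by push_cast; ring,
        show β + 2 * (k:ℝ) = β + ((2*k : ℕ) : ℝ) by push_cast; ring,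
        Real.rpow_add hx1', Real.rpow_add h0, Real.rpow_natCast, Real.rpow_natCast]
      ring

lemma jip_sub_left (a b : ℝ) (f g h : ℝ → ℝ)
    (hf : IntervalIntegrable (fun x => (1 - x) ^ a * x ^ b * f x * h x) volume 0 1)
    (hg : IntervalIntegrable (fun x => (1 - x) ^ a * x ^ b * g x * h x) volume 0 1) :
    jip a b (fun x => f x - g x) h = jip a b f h - jip a b g h := by
  unfold jip
  rw [← intervalIntegral.integral_sub hf hg]
  apply intervalIntegral.integral_congr
  intro x _
  dsimp only
  ring

lemma jip_const_mul_left (a b C : ℝ) (f g : ℝ → ℝ) :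
    jip a b (fun x => C * f x) g = C * jip a b f g := by
  unfold jip
  rw [← intervalIntegral.integral_const_mul]
  apply intervalIntegral.integral_congr
  intro x _
  dsimp only
  ring

lemma jip_const_mul_right (a b C : ℝ) (f g : ℝ → ℝ) :
    jip a b f (fun x => C * g x) = C * jip a b f g := by
  unfold jip
  rw [← intervalIntegral.integral_const_mul]
  apply intervalIntegral.integral_congr
  intro x _
  dsimp only
  ring

lemma jip_sum_right {ι : Type*} (a b : ℝ) (f : ℝ → ℝ) (S : Finset ι) (g : ι → ℝ → ℝ)
    (hint : ∀ s ∈ S, IntervalIntegrable (fun x => (1 - x) ^ a * x ^ b * f x * g s x) volume 0 1) :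
    jip a b f (fun x => ∑ s ∈ S, g s x) = ∑ s ∈ S, jip a b f (g s) := by
  unfold jip
  rw [← intervalIntegral.integral_finset_sum hint]
  apply intervalIntegral.integral_congr
  intro x _
  dsimp only
  rw [Finset.mul_sum]

lemma jip_shift (α β : ℝ) (hα : -1 < α) (hβ : -1 < β) (n k l M s : ℕ) (hM : n = k + l + M)
    (hs : s ≤ M) (Q : Polynomial ℝ) :
    jip α β (fun x => (X ^ k * ((1 - X) ^ l * Q)).eval x) (bern n (k + s))
      = ((n.choose (k + s) : ℝ) / (M.choose s : ℝ)) *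
        jip (α + 2 * l) (β + 2 * k) (fun x => Q.eval x) (bern M s) := by
  unfold jip
  rw [← intervalIntegral.integral_const_mul]
  apply intervalIntegral.integral_congr
  intro x hx
  rw [Set.uIcc_of_le zero_le_one] at hx
  dsimp only
  have hCM : (M.choose s : ℝ) ≠ 0 := Nat.cast_ne_zero.mpr (Nat.choose_pos hs).ne'
  have key := pow_shift α β hα hβ k l (Q.eval x * bern M s x) hx.1 hx.2
  have step1 : ((n.choose (k + s) : ℝ) / (M.choose s : ℝ)) *
      ((1 - x) ^ (α + 2 * (l:ℝ)) * x ^ (β + 2 * (k:ℝ)) * Q.eval x * bern M s x)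
      = ((n.choose (k + s) : ℝ) / (M.choose s : ℝ)) *
      ((1 - x) ^ (α + 2 * (l:ℝ)) * x ^ (β + 2 * (k:ℝ)) * (Q.eval x * bern M s x)) := by
    ring
  rw [step1, key]
  simp only [Polynomial.eval_mul, Polynomial.eval_pow, Polynomial.eval_sub,
    Polynomial.eval_one, Polynomial.eval_X]
  unfold bern
  rw [show n - (k + s) = (M - s) + l by omega]
  field_simp
  ring

lemma bern_key (n k l M s : ℕ) (hM : n = k + l + M) (hs : s ≤ M) (y : ℝ) :
    y ^ k * ((1 - y) ^ l * bern M s y)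
       = ((M.choose s : ℝ) / (n.choose (k + s) : ℝ)) * bern n (k + s) y := by
  have hC : (n.choose (k + s) : ℝ) ≠ 0 :=
    Nat.cast_ne_zero.mpr (Nat.choose_pos (by omega)).ne'
  unfold bern
  rw [show n - (k + s) = (M - s) + l by omega, pow_add, pow_add]
  field_simp

lemma X_pow_dvd_of_deriv (F : Polynomial ℝ) (k : ℕ)
    (h : ∀ r < k, (Polynomial.derivative^[r] F).eval 0 = 0) : X ^ k ∣ F := by
  rw [Polynomial.X_pow_dvd_iff]
  intro d hd
  have hh := h d hd
  rw [← Polynomial.coeff_zero_eq_eval_zero, Polynomial.coeff_iterate_derivative] at hh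
  simp only [zero_add, Nat.descFactorial_self, nsmul_eq_mul] at hh
  have : (d.factorial : ℝ) ≠ 0 := Nat.cast_ne_zero.mpr d.factorial_ne_zero
  exact (mul_eq_zero.mp hh).resolve_left this

lemma one_sub_X_pow_dvd (F : Polynomial ℝ) (l : ℕ)
    (h : ∀ r < l, (Polynomial.derivative^[r] F).eval 1 = 0) : (1 - X) ^ l ∣ F := by
  have h' : X ^ l ∣ F.comp (1 - X) := by
    apply X_pow_dvd_of_deriv
    intro r hr
    rw [Polynomial.iterate_derivative_comp_one_sub_X, Polynomial.eval_mul, Polynomial.eval_comp]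
    simp [h r hr]
  obtain ⟨H, hH⟩ := h'
  refine ⟨H.comp (1 - X), ?_⟩
  have hcomp : ((1 : Polynomial ℝ) - X).comp (1 - X) = X := by
    simp [Polynomial.sub_comp]
  calc F = (F.comp (1 - X)).comp (1 - X) := by
            rw [Polynomial.comp_assoc, hcomp, Polynomial.comp_X]
    _ = (X ^ l * H).comp (1 - X) := by rw [hH]
    _ = (1 - X) ^ l * H.comp (1 - X) := by
          rw [Polynomial.mul_comp, Polynomial.pow_comp, Polynomial.X_comp]

lemma pow_eq_sum_bern (M t : ℕ) (ht : t ≤ M) (x : ℝ) :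
    x ^ t = ∑ u ∈ Finset.range (M - t + 1),
      (((M - t).choose u : ℝ) / (M.choose (t + u) : ℝ)) * bern M (t + u) x := by
  have h1 : (1:ℝ) = ∑ u ∈ Finset.range (M - t + 1),
      x ^ u * (1 - x) ^ (M - t - u) * ((M - t).choose u : ℝ) := by
    have := add_pow x (1 - x) (M - t)
    norm_num at this
    exact this
  calc x ^ t = x ^ t * 1 := (mul_one _).symm
    _ = ∑ u ∈ Finset.range (M - t + 1),
        x ^ t * (x ^ u * (1 - x) ^ (M - t - u) * ((M - t).choose u : ℝ)) := by
        conv_lhs => rw [h1]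
        rw [Finset.mul_sum]
    _ = _ := by
        apply Finset.sum_congr rfl
        intro u hu
        have hu' : u ≤ M - t := Nat.lt_succ_iff.mp (Finset.mem_range.mp hu)
        have hC : (M.choose (t + u) : ℝ) ≠ 0 :=
          Nat.cast_ne_zero.mpr (Nat.choose_pos (by omega)).ne'
        unfold bern
        rw [show M - (t + u) = (M - t) - u by omega, pow_add]
        field_simp

lemma poly_zero_of_jip_self (a b : ℝ) (ha : -1 < a) (hb : -1 < b) (P : Polynomial ℝ)
    (h : jip a b (fun x => P.eval x) (fun x => P.eval x) = 0) : P = 0 := by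
  by_contra hP
  set W : ℝ → ℝ := fun x => (1 - x) ^ a * x ^ b * P.eval x * P.eval x with hW
  have hint : IntervalIntegrable W volume 0 1 :=
    integ_aux ha hb P.continuous_aeval P.continuous_aeval
  have hIoc : IntegrableOn W (Set.Ioc 0 1) volume :=
    (intervalIntegrable_iff_integrableOn_Ioc_of_le zero_le_one).mp hint
  have hnonneg : ∀ x ∈ Set.Ioc (0:ℝ) 1, 0 ≤ W x := by
    intro x hx
    have h1 : 0 ≤ (1 - x) ^ a := Real.rpow_nonneg (by linarith [hx.2]) _
    have h2 : 0 ≤ x ^ b := Real.rpow_nonneg hx.1.le _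
    simp only [hW]
    nlinarith [mul_self_nonneg (P.eval x), mul_nonneg h1 h2]
  have h0 : ∫ x in Set.Ioc (0:ℝ) 1, W x ∂volume = 0 := by
    rw [← intervalIntegral.integral_of_le zero_le_one]
    exact h
  have hzE : W =ᵐ[volume.restrict (Set.Ioc (0:ℝ) 1)] 0 :=
    (MeasureTheory.integral_eq_zero_iff_of_nonneg_ae
      ((ae_restrict_iff' measurableSet_Ioc).mpr (ae_of_all _ hnonneg)) hIoc).mp h0
  have hz : ∀ᵐ x ∂(volume.restrict (Set.Ioc (0:ℝ) 1)), W x = 0 :=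
    hzE.mono (fun x hx => by simpa using hx)
  have hz' : ∀ᵐ x ∂(volume : Measure ℝ), x ∈ Set.Ioc (0:ℝ) 1 → W x = 0 :=
    (ae_restrict_iff' measurableSet_Ioc).mp hz
  have hfin : Set.Finite {x : ℝ | P.IsRoot x} := P.finite_setOf_isRoot hP
  have hae2 : ∀ᵐ x ∂(volume : Measure ℝ), x ∉ {x : ℝ | P.IsRoot x} :=
    (MeasureTheory.measure_eq_zero_iff_ae_notMem).mp (hfin.measure_zero _)
  have hfreq : ∃ᵐ x ∂(volume : Measure ℝ), x ∈ Set.Ioo (0:ℝ) 1 := by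
    rw [MeasureTheory.frequently_ae_mem_iff, Real.volume_Ioo]
    norm_num
  obtain ⟨x, hx, hcomb⟩ := (hfreq.and_eventually (hz'.and hae2)).exists
  have hW0 : W x = 0 := hcomb.1 (Set.Ioo_subset_Ioc_self hx)
  have hWpos : 0 < W x := by
    have h1 : 0 < (1 - x) ^ a := Real.rpow_pos_of_pos (by linarith [hx.2]) _
    have h2 : 0 < x ^ b := Real.rpow_pos_of_pos hx.1 _
    have h3 : P.eval x ≠ 0 := hcomb.2
    simp only [hW]
    nlinarith [mul_pos h1 h2, mul_self_pos.mpr h3]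
  exact absurd hW0 hWpos.ne'

end Aux

theorem constrained_dual_bernstein_bezier_representation (α β : ℝ) (hα : α > -1) (hβ : β > -1)
    (n k l i : ℕ) (hkl : k + l ≤ n) (hik : k ≤ i) (hil : i ≤ n - l)
    (Dc : Polynomial ℝ) (hdeg : Dc.natDegree ≤ n)
    (h0 : ∀ r < k, (Polynomial.derivative^[r] Dc).eval 0 = 0)
    (h1 : ∀ r < l, (Polynomial.derivative^[r] Dc).eval 1 = 0)
    (hdual : ∀ j, k ≤ j → j ≤ n - l →
      jip α β (fun x => Dc.eval x) (bern n j) = if i = j then 1 else 0)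
    (Du : ℕ → Polynomial ℝ) (hdegu : ∀ r ≤ n - k - l, (Du r).natDegree ≤ n - k - l)
    (hdualu : ∀ r ≤ n - k - l, ∀ s ≤ n - k - l,
      jip (α + 2 * l) (β + 2 * k) (fun x => (Du r).eval x) (bern (n - k - l) s) =
        if r = s then 1 else 0)
    (c : ℕ → ℕ → ℝ)
    (hc : ∀ r ≤ n - k - l, ∀ x : ℝ,
      (Du r).eval x = ∑ s ∈ Finset.range (n - k - l + 1), c r s * bern (n - k - l) s x)
    (x : ℝ) :
    Dc.eval x =
      ∑ j ∈ Finset.Icc k (n - l),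
        ((((n - k - l).choose (i - k) : ℝ)) / (n.choose i : ℝ)) *
          ((((n - k - l).choose (j - k) : ℝ)) / (n.choose j : ℝ)) *
          c (i - k) (j - k) * bern n j x := by
  classical
  open Polynomial MeasureTheory in
  set M := n - k - l with hMdef
  have hα' : -1 < α := hα
  have hβ' : -1 < β := hβ
  have hm : n = k + l + M := by omega
  have hiM : i - k ≤ M := by omega
  have hCni : (n.choose i : ℝ) ≠ 0 := Nat.cast_ne_zero.mpr (Nat.choose_pos (by omega)).ne'
  have hCMik : (M.choose (i - k) : ℝ) ≠ 0 := Nat.cast_ne_zero.mpr (Nat.choose_pos hiM).ne'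
  obtain ⟨E, hEdef⟩ : ∃ E : Polynomial ℝ, E = X ^ k * ((1 - X) ^ l *
      (Polynomial.C ((M.choose (i - k) : ℝ) / (n.choose i : ℝ)) * Du (i - k))) := ⟨_, rfl⟩
  -- Step B : evaluation of E equals the claimed sum
  have hEeval : ∀ y : ℝ, E.eval y =
      ∑ j ∈ Finset.Icc k (n - l),
        (((M.choose (i - k) : ℝ)) / (n.choose i : ℝ)) *
          (((M.choose (j - k) : ℝ)) / (n.choose j : ℝ)) *
          c (i - k) (j - k) * bern n j y := by
    intro y
    have hE1 : E.eval y = y ^ k * ((1 - y) ^ l *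
        (((M.choose (i - k) : ℝ) / (n.choose i : ℝ)) * (Du (i - k)).eval y)) := by
      rw [hEdef]; simp
    rw [hE1, hc (i - k) hiM y]
    rw [Finset.mul_sum, Finset.mul_sum, Finset.mul_sum]
    apply Finset.sum_nbij' (i := fun s => k + s) (j := fun j => j - k)
    · intro s hs
      simp only [Finset.mem_range] at hs
      simp only [Finset.mem_Icc]
      omega
    · intro j hj
      simp only [Finset.mem_Icc] at hj
      simp only [Finset.mem_range]
      omega
    · intro s hs; omega
    · intro j hj
      simp only [Finset.mem_Icc] at hj
      omega
    · intro s hs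
      simp only [Finset.mem_range] at hs
      have hsM : s ≤ M := by omega
      have hkey := bern_key n k l M s hm hsM y
      have hred : (k + s) - k = s := by omega
      rw [hred]
      have hCn : (n.choose (k + s) : ℝ) ≠ 0 :=
        Nat.cast_ne_zero.mpr (Nat.choose_pos (by omega)).ne'
      calc y ^ k * ((1 - y) ^ l * (((M.choose (i - k) : ℝ) / (n.choose i : ℝ)) *
              (c (i - k) s * bern M s y)))
          = ((M.choose (i - k) : ℝ) / (n.choose i : ℝ)) * (c (i - k) s *
              (y ^ k * ((1 - y) ^ l * bern M s y))) := by ring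
        _ = ((M.choose (i - k) : ℝ) / (n.choose i : ℝ)) *
            ((M.choose s : ℝ) / (n.choose (k + s) : ℝ)) *
            c (i - k) s * bern n (k + s) y := by rw [hkey]; ring
  -- Step C : E satisfies the same duality
  have hEdual : ∀ j, k ≤ j → j ≤ n - l →
      jip α β (fun z => E.eval z) (bern n j) = if i = j then 1 else 0 := by
    intro j hjk hjl
    obtain ⟨s, rfl⟩ : ∃ s, j = k + s := ⟨j - k, by omega⟩
    have hsM : s ≤ M := by omega
    rw [hEdef, jip_shift α β hα' hβ' n k l M s hm hsM]
    have hfn : (fun z => (Polynomial.C ((M.choose (i - k) : ℝ) / (n.choose i : ℝ)) *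
        Du (i - k)).eval z)
        = fun z => ((M.choose (i - k) : ℝ) / (n.choose i : ℝ)) * (Du (i - k)).eval z := by
      funext z; simp
    rw [hfn, jip_const_mul_left, hdualu (i - k) hiM s hsM]
    have hCn : (n.choose (k + s) : ℝ) ≠ 0 :=
      Nat.cast_ne_zero.mpr (Nat.choose_pos (by omega)).ne'
    have hCM : (M.choose s : ℝ) ≠ 0 := Nat.cast_ne_zero.mpr (Nat.choose_pos hsM).ne'
    by_cases hij : i = k + s
    · rw [if_pos (by omega : i - k = s), if_pos hij, hij,
        show (k + s) - k = s by omega]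
      field_simp
    · rw [if_neg (by omega : ¬ i - k = s), if_neg hij]
      ring
  -- Step D/E : divisibility
  have h1Xne : (1 - X : Polynomial ℝ) ≠ 0 := fun h => by
    simpa using congrArg (Polynomial.eval 0) h
  have h1Xdeg : (1 - X : Polynomial ℝ).natDegree = 1 := by
    rw [show (1 - X : Polynomial ℝ) = -(X - Polynomial.C 1) by rw [Polynomial.C_1]; ring, natDegree_neg,
      natDegree_X_sub_C]
  have hdvd : X ^ k * (1 - X) ^ l ∣ Dc - E := by
    have hcop : IsCoprime (X ^ k : Polynomial ℝ) ((1 - X) ^ l) := by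
      apply IsCoprime.pow
      exact ⟨1, 1, by ring⟩
    apply hcop.mul_dvd
    · apply dvd_sub
      · exact X_pow_dvd_of_deriv Dc k h0
      · rw [hEdef]; exact dvd_mul_right _ _
    · apply dvd_sub
      · exact one_sub_X_pow_dvd Dc l h1
      · rw [hEdef]; exact ⟨X ^ k * (Polynomial.C ((M.choose (i - k) : ℝ) / (n.choose i : ℝ)) *
          Du (i - k)), by ring⟩
  obtain ⟨P, hPdef⟩ := hdvd
  have hP' : Dc - E = X ^ k * ((1 - X) ^ l * P) := by rw [hPdef]; ring
  have hDcE : Dc = E := by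
    by_cases hP0 : P = 0
    · have : Dc - E = 0 := by rw [hP', hP0]; ring
      exact sub_eq_zero.mp this
    · exfalso
      -- degree bound on P
      have hdegE : E.natDegree ≤ n := by
        rw [hEdef]
        apply le_trans (natDegree_mul_le)
        have e1 : (X ^ k : Polynomial ℝ).natDegree = k := natDegree_X_pow k
        have e2 : ((1 - X : Polynomial ℝ) ^ l).natDegree ≤ l := by
          apply le_trans (natDegree_pow_le)
          rw [h1Xdeg]; omega
        have e3 : (Polynomial.C ((M.choose (i - k) : ℝ) / (n.choose i : ℝ)) *
            Du (i - k)).natDegree ≤ M := by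
          apply le_trans (natDegree_mul_le)
          rw [natDegree_C]
          simpa using hdegu (i - k) hiM
        have e4 := natDegree_mul_le (p := ((1 - X : Polynomial ℝ) ^ l))
          (q := Polynomial.C ((M.choose (i - k) : ℝ) / (n.choose i : ℝ)) * Du (i - k))
        omega
      have hFne : Dc - E ≠ 0 := by
        intro hh
        rw [hh] at hP'
        have := hP'.symm
        rcases mul_eq_zero.mp this with h | h
        · exact pow_ne_zero _ X_ne_zero h
        · rcases mul_eq_zero.mp h with h' | h'
          · exact pow_ne_zero _ h1Xne h'
          · exact hP0 h'
      have hdegP : P.natDegree ≤ M := by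
        have hdegF : (Dc - E).natDegree ≤ n :=
          le_trans (natDegree_sub_le _ _) (max_le hdeg hdegE)
        have hmul : (Dc - E).natDegree = k + (l * 1 + P.natDegree) := by
          rw [hP', natDegree_mul (pow_ne_zero _ X_ne_zero)
            (mul_ne_zero (pow_ne_zero _ h1Xne) hP0),
            natDegree_mul (pow_ne_zero _ h1Xne) hP0,
            natDegree_X_pow, natDegree_pow, h1Xdeg]
        omega
      -- dual products of P with Bernstein basis vanish
      have hjipP : ∀ s ≤ M, jip (α + 2 * l) (β + 2 * k)
          (fun z => P.eval z) (bern M s) = 0 := by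
        intro s hs
        have hshift := jip_shift α β hα' hβ' n k l M s hm hs P
        have hzero : jip α β (fun z => (X ^ k * ((1 - X) ^ l * P)).eval z)
            (bern n (k + s)) = 0 := by
          have hfn : (fun z => (X ^ k * ((1 - X) ^ l * P)).eval z)
              = fun z => Dc.eval z - E.eval z := by
            funext z; rw [← hP', Polynomial.eval_sub]
          rw [hfn, jip_sub_left α β (fun z => Dc.eval z) (fun z => E.eval z) (bern n (k + s))
            (integ_aux hα' hβ' Dc.continuous (bern_cont n (k + s)))
            (integ_aux hα' hβ' E.continuous (bern_cont n (k + s))),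
            hdual (k + s) (by omega) (by omega), hEdual (k + s) (by omega) (by omega)]
          ring
        rw [hzero] at hshift
        have hCn : (n.choose (k + s) : ℝ) ≠ 0 :=
          Nat.cast_ne_zero.mpr (Nat.choose_pos (by omega)).ne'
        have hCM : (M.choose s : ℝ) ≠ 0 := Nat.cast_ne_zero.mpr (Nat.choose_pos hs).ne'
        have hratio : ((n.choose (k + s) : ℝ) / (M.choose s : ℝ)) ≠ 0 := div_ne_zero hCn hCM
        exact (mul_eq_zero.mp hshift.symm).resolve_left hratio
      have hαl : (-1 : ℝ) < α + 2 * l := by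
        have : (0:ℝ) ≤ (l : ℝ) := Nat.cast_nonneg l
        linarith
      have hβk : (-1 : ℝ) < β + 2 * k := by
        have : (0:ℝ) ≤ (k : ℝ) := Nat.cast_nonneg k
        linarith
      -- dual products with monomials vanish
      have hjipPt : ∀ t ≤ M, jip (α + 2 * l) (β + 2 * k)
          (fun z => P.eval z) (fun z => z ^ t) = 0 := by
        intro t ht
        have hfn : (fun z : ℝ => z ^ t) = fun z => ∑ u ∈ Finset.range (M - t + 1),
            (((M - t).choose u : ℝ) / (M.choose (t + u) : ℝ)) * bern M (t + u) z := by
          funext z; exact pow_eq_sum_bern M t ht z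
        rw [hfn, jip_sum_right (α + 2 * l) (β + 2 * k) (fun z => P.eval z)
          (Finset.range (M - t + 1))
          (fun u z => (((M - t).choose u : ℝ) / (M.choose (t + u) : ℝ)) * bern M (t + u) z)
          (fun u _ => integ_aux hαl hβk P.continuous
            (continuous_const.mul (bern_cont M (t + u))))]
        apply Finset.sum_eq_zero
        intro u hu
        have hu' : u ≤ M - t := Nat.lt_succ_iff.mp (Finset.mem_range.mp hu)
        rw [jip_const_mul_right, hjipP (t + u) (by omega), mul_zero]
      -- self inner product vanishes
      have hPP : jip (α + 2 * l) (β + 2 * k)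
          (fun z => P.eval z) (fun z => P.eval z) = 0 := by
        have hfn : (fun z : ℝ => P.eval z) = fun z => ∑ t ∈ Finset.range (M + 1),
            P.coeff t * z ^ t := by
          funext z
          exact Polynomial.eval_eq_sum_range' (lt_of_le_of_lt hdegP (Nat.lt_succ_self M)) z
        nth_rewrite 2 [hfn]
        rw [jip_sum_right (α + 2 * l) (β + 2 * k) (fun z => P.eval z)
          (Finset.range (M + 1))
          (fun t z => P.coeff t * z ^ t)
          (fun t _ => integ_aux hαl hβk P.continuous
            (continuous_const.mul (continuous_pow t)))]
        apply Finset.sum_eq_zero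
        intro t ht
        have ht' : t ≤ M := Nat.lt_succ_iff.mp (Finset.mem_range.mp ht)
        rw [jip_const_mul_right, hjipPt t ht', mul_zero]
      exact hP0 (poly_zero_of_jip_self _ _ hαl hβk P hPP)
  rw [hDcE]
  exact hEeval x
end
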